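/- arXiv:2304.06902 — 2 statements merged into one kernel-verified Lean document; each statement's English description precedes it below -/
import Mathlib

section
/- Let B̃ be the block diagonal matrix with diagonal blocks (1/h^d) M ⊗ K and K, where M and K are symmetric positive definite matrices satisfying λ_max(M) ≤ h^d, λ_min(M) ≥ (h/3)^d, and K has positive eigenvalues. Then λ_max(B̃) ≤ λ_max(K) and λ_min(B̃) ≥ λ_min(K)/3^d, so κ(B̃) ≤ 3^d κ(K). -/
open Matrix Kronecker

set_option linter.unusedSectionVars false

section Aux

variable {n : Type*} [Fintype n] [DecidableEq n]

private lemma psd_smul' {A : Matrix n n ℝ} (hA : A.PosSemidef) {c : ℝ} (hc : 0 ≤ c) :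
    (c • A).PosSemidef := by
  refine Matrix.PosSemidef.of_dotProduct_mulVec_nonneg ?_ ?_
  · show _ = _
    rw [Matrix.conjTranspose_smul, hA.1, star_trivial]
  intro x
  rw [smul_mulVec, dotProduct_smul]
  exact smul_nonneg hc (hA.dotProduct_mulVec_nonneg x)

private lemma conj_smul_one {A : Matrix n n ℝ} (hA : A.IsHermitian) (c : ℝ) :
    c • (1 : Matrix n n ℝ) =
      (hA.eigenvectorUnitary : Matrix n n ℝ) * (c • 1) *
        star (hA.eigenvectorUnitary : Matrix n n ℝ) := by
  rw [Matrix.mul_smul, Matrix.mul_one, Matrix.smul_mul,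
    (Matrix.mem_unitaryGroup_iff).mp hA.eigenvectorUnitary.2]

private lemma psd_shift_lower {A : Matrix n n ℝ} (hA : A.IsHermitian) {c : ℝ}
    (hc : ∀ i, c ≤ hA.eigenvalues i) : (A - c • 1).PosSemidef := by
  have h1 : A - c • 1 =
      (hA.eigenvectorUnitary : Matrix n n ℝ) *
        diagonal (fun i => hA.eigenvalues i - c) *
        star (hA.eigenvectorUnitary : Matrix n n ℝ) := by
    nth_rewrite 1 [hA.spectral_theorem, conj_smul_one hA c]
    rw [Unitary.conjStarAlgAut_apply, ← Matrix.sub_mul, ← Matrix.mul_sub, Matrix.smul_one_eq_diagonal,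
      Matrix.diagonal_sub]
    congr 1
  rw [h1, Matrix.star_eq_conjTranspose]
  exact (Matrix.posSemidef_diagonal_iff.mpr
    (fun i => sub_nonneg.mpr (hc i))).mul_mul_conjTranspose_same _

private lemma psd_shift_upper {A : Matrix n n ℝ} (hA : A.IsHermitian) {c : ℝ}
    (hc : ∀ i, hA.eigenvalues i ≤ c) : (c • 1 - A).PosSemidef := by
  have h1 : c • 1 - A =
      (hA.eigenvectorUnitary : Matrix n n ℝ) *
        diagonal (fun i => c - hA.eigenvalues i) *
        star (hA.eigenvectorUnitary : Matrix n n ℝ) := by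
    nth_rewrite 1 [hA.spectral_theorem, conj_smul_one hA c]
    rw [Unitary.conjStarAlgAut_apply, ← Matrix.sub_mul, ← Matrix.mul_sub, Matrix.smul_one_eq_diagonal,
      Matrix.diagonal_sub]
    congr 1
  rw [h1, Matrix.star_eq_conjTranspose]
  exact (Matrix.posSemidef_diagonal_iff.mpr
    (fun i => sub_nonneg.mpr (hc i))).mul_mul_conjTranspose_same _

private lemma dot_self_eigvec {A : Matrix n n ℝ} (hA : A.IsHermitian) (i : n) :
    star (⇑(hA.eigenvectorBasis i)) ⬝ᵥ ⇑(hA.eigenvectorBasis i) = 1 := by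
  have h1 : (inner ℝ (hA.eigenvectorBasis i) (hA.eigenvectorBasis i) : ℝ) = 1 := by
    rw [real_inner_self_eq_norm_sq, hA.eigenvectorBasis.orthonormal.1 i]
    norm_num
  rw [EuclideanSpace.inner_eq_star_dotProduct] at h1
  exact (dotProduct_comm _ _).trans h1

private lemma eig_le_of_psd {A : Matrix n n ℝ} (hA : A.IsHermitian) {c : ℝ}
    (hpsd : (c • 1 - A).PosSemidef) (i : n) : hA.eigenvalues i ≤ c := by
  have h0 := hpsd.dotProduct_mulVec_nonneg (⇑(hA.eigenvectorBasis i))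
  rw [Matrix.sub_mulVec, Matrix.smul_mulVec, Matrix.one_mulVec,
    hA.mulVec_eigenvectorBasis, dotProduct_sub, dotProduct_smul, dotProduct_smul,
    dot_self_eigvec hA i] at h0
  simpa using sub_nonneg.mp h0

private lemma le_eig_of_psd {A : Matrix n n ℝ} (hA : A.IsHermitian) {c : ℝ}
    (hpsd : (A - c • 1).PosSemidef) (i : n) : c ≤ hA.eigenvalues i := by
  have h0 := hpsd.dotProduct_mulVec_nonneg (⇑(hA.eigenvectorBasis i))
  rw [Matrix.sub_mulVec, Matrix.smul_mulVec, Matrix.one_mulVec,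
    hA.mulVec_eigenvectorBasis, dotProduct_sub, dotProduct_smul, dotProduct_smul,
    dot_self_eigvec hA i] at h0
  simpa using sub_nonneg.mp h0

private lemma psd_kron {m : Type*} [Fintype m] [DecidableEq m]
    {A : Matrix m m ℝ} {B : Matrix n n ℝ} (hA : A.PosSemidef) (hB : B.PosSemidef) :
    (A ⊗ₖ B).PosSemidef := by
  exact hA.kronecker hB

private lemma psd_fromBlocks {m : Type*} [Fintype m] [DecidableEq m]
    {A : Matrix m m ℝ} {D : Matrix n n ℝ} (hA : A.PosSemidef) (hD : D.PosSemidef) :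
    (Matrix.fromBlocks A 0 0 D).PosSemidef := by
  refine Matrix.PosSemidef.of_dotProduct_mulVec_nonneg ?_ ?_
  · show _ = _
    rw [Matrix.fromBlocks_conjTranspose, hA.1, hD.1]
    simp
  · intro x
    have hx : x = Sum.elim (x ∘ Sum.inl) (x ∘ Sum.inr) := by ext (i | i) <;> rfl
    rw [hx, Matrix.fromBlocks_mulVec]
    have hs : star (Sum.elim (x ∘ Sum.inl) (x ∘ Sum.inr)) =
        Sum.elim (star (x ∘ Sum.inl)) (star (x ∘ Sum.inr)) := by ext (i | i) <;> rfl
    rw [hs]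
    simp only [Matrix.zero_mulVec, add_zero, zero_add,
      sumElim_dotProduct_sumElim]
    exact add_nonneg (hA.dotProduct_mulVec_nonneg _) (hD.dotProduct_mulVec_nonneg _)

private lemma kron_smul_one_sub {m : Type*} [Fintype m] [DecidableEq m]
    (M : Matrix m m ℝ) (K : Matrix n n ℝ) (c : ℝ) :
    (c • 1 - M) ⊗ₖ K = c • ((1 : Matrix m m ℝ) ⊗ₖ K) - M ⊗ₖ K := by
  ext ⟨i, j⟩ ⟨k, l⟩
  simp only [Matrix.kroneckerMap_apply, Matrix.sub_apply, Matrix.smul_apply,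
    smul_eq_mul]
  ring

private lemma kron_sub_smul_one {m : Type*} [Fintype m] [DecidableEq m]
    (M : Matrix m m ℝ) (K : Matrix n n ℝ) (c : ℝ) :
    (M - c • 1) ⊗ₖ K = M ⊗ₖ K - c • ((1 : Matrix m m ℝ) ⊗ₖ K) := by
  ext ⟨i, j⟩ ⟨k, l⟩
  simp only [Matrix.kroneckerMap_apply, Matrix.sub_apply, Matrix.smul_apply,
    smul_eq_mul]
  ring

private lemma one_kron_smul_one_sub {m : Type*} [Fintype m] [DecidableEq m]
    (K : Matrix n n ℝ) (c : ℝ) :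
    (1 : Matrix m m ℝ) ⊗ₖ (c • 1 - K) =
      c • (1 : Matrix (m × n) (m × n) ℝ) - (1 : Matrix m m ℝ) ⊗ₖ K := by
  rw [← Matrix.one_kronecker_one (α := ℝ) (m := m) (n := n)]
  ext ⟨i, j⟩ ⟨k, l⟩
  simp only [Matrix.kroneckerMap_apply, Matrix.sub_apply, Matrix.smul_apply,
    smul_eq_mul]
  ring

private lemma one_kron_sub_smul_one {m : Type*} [Fintype m] [DecidableEq m]
    (K : Matrix n n ℝ) (c : ℝ) :
    (1 : Matrix m m ℝ) ⊗ₖ (K - c • 1) =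
      (1 : Matrix m m ℝ) ⊗ₖ K - c • (1 : Matrix (m × n) (m × n) ℝ) := by
  rw [← Matrix.one_kronecker_one (α := ℝ) (m := m) (n := n)]
  ext ⟨i, j⟩ ⟨k, l⟩
  simp only [Matrix.kroneckerMap_apply, Matrix.sub_apply, Matrix.smul_apply,
    smul_eq_mul]
  ring

end Aux

theorem stmt8 {p q d : ℕ} (hp : 0 < p) (hq : 0 < q) (hd : 1 ≤ d)
    (h : ℝ) (hh : 0 < h)
    (M : Matrix (Fin p) (Fin p) ℝ) (K : Matrix (Fin q) (Fin q) ℝ)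
    (hM : M.PosDef) (hK : K.PosDef)
    (hMmax : ∀ i, hM.1.eigenvalues i ≤ h ^ d)
    (hMmin : ∀ i, (h / 3) ^ d ≤ hM.1.eigenvalues i)
    (Btil : Matrix ((Fin p × Fin q) ⊕ Fin q) ((Fin p × Fin q) ⊕ Fin q) ℝ)
    (hBdef : Btil = Matrix.fromBlocks ((1 / h ^ d) • (M ⊗ₖ K)) 0 0 K)
    (hB : Btil.IsHermitian) :
    (⨆ i, hB.eigenvalues i) ≤ (⨆ i, hK.1.eigenvalues i) ∧
    (⨅ i, hK.1.eigenvalues i) / 3 ^ d ≤ (⨅ i, hB.eigenvalues i) ∧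
    (⨆ i, hB.eigenvalues i) / (⨅ i, hB.eigenvalues i) ≤
      3 ^ d * ((⨆ i, hK.1.eigenvalues i) / (⨅ i, hK.1.eigenvalues i)) := by
  haveI : NeZero p := ⟨hp.ne'⟩
  haveI : NeZero q := ⟨hq.ne'⟩
  have hhd : (0 : ℝ) < h ^ d := pow_pos hh d
  have h3d : (0 : ℝ) < 3 ^ d := by positivity
  set a : ℝ := ⨅ i, hK.1.eigenvalues i with ha_def
  set b : ℝ := ⨆ i, hK.1.eigenvalues i with hb_def
  have hKlb : ∀ i, a ≤ hK.1.eigenvalues i := fun i =>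
    ciInf_le (Finite.bddBelow_range _) i
  have hKub : ∀ i, hK.1.eigenvalues i ≤ b := fun i =>
    le_ciSup (Finite.bddAbove_range _) i
  have ha_pos : 0 < a := by
    obtain ⟨i0, hi0⟩ := Finite.exists_min (hK.1.eigenvalues)
    exact lt_of_lt_of_le (hK.eigenvalues_pos i0) (le_ciInf hi0)
  have hb_pos : 0 < b := lt_of_lt_of_le ha_pos (le_trans (hKlb ⟨0, hq⟩) (hKub ⟨0, hq⟩))
  -- PSD building blocks
  have hM_ub : ((h ^ d) • 1 - M).PosSemidef := psd_shift_upper hM.1 hMmax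
  have hM_lb : (M - ((h / 3) ^ d) • 1).PosSemidef := psd_shift_lower hM.1 hMmin
  have hK_ub : (b • 1 - K).PosSemidef := psd_shift_upper hK.1 hKub
  have ha3_le : a / 3 ^ d ≤ a := by
    apply div_le_self ha_pos.le
    exact one_le_pow₀ (by norm_num)
  have hK_lb : (K - (a / 3 ^ d) • 1).PosSemidef :=
    psd_shift_lower hK.1 (fun i => le_trans ha3_le (hKlb i))
  -- Upper bound for the Kronecker block
  have upper1 : ((h ^ d * b) • 1 - M ⊗ₖ K).PosSemidef := by
    have heq : (h ^ d * b) • (1 : Matrix (Fin p × Fin q) (Fin p × Fin q) ℝ) - M ⊗ₖ K =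
        ((h ^ d) • 1 - M) ⊗ₖ K + (h ^ d) • ((1 : Matrix (Fin p) (Fin p) ℝ) ⊗ₖ
          (b • 1 - K)) := by
      rw [kron_smul_one_sub, one_kron_smul_one_sub]
      module
    rw [heq]
    exact (psd_kron hM_ub hK.posSemidef).add
      (psd_smul' (psd_kron Matrix.PosSemidef.one hK_ub) hhd.le)
  have upper2 : (b • 1 - (1 / h ^ d) • (M ⊗ₖ K)).PosSemidef := by
    have heq : b • (1 : Matrix (Fin p × Fin q) (Fin p × Fin q) ℝ) -
        (1 / h ^ d) • (M ⊗ₖ K) = (1 / h ^ d) • ((h ^ d * b) • 1 - M ⊗ₖ K) := by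
      rw [smul_sub, smul_smul]
      congr 2
      field_simp
    rw [heq]
    exact psd_smul' upper1 (by positivity)
  -- Lower bound for the Kronecker block
  have lower1 : (M ⊗ₖ K - ((h / 3) ^ d * a) • 1).PosSemidef := by
    have heq : M ⊗ₖ K - ((h / 3) ^ d * a) • (1 : Matrix (Fin p × Fin q) (Fin p × Fin q) ℝ) =
        (M - ((h / 3) ^ d) • 1) ⊗ₖ K + ((h / 3) ^ d) • ((1 : Matrix (Fin p) (Fin p) ℝ) ⊗ₖ
          (K - a • 1)) := by
      rw [kron_sub_smul_one, one_kron_sub_smul_one]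
      module
    rw [heq]
    exact (psd_kron hM_lb hK.posSemidef).add
      (psd_smul' (psd_kron Matrix.PosSemidef.one
        (psd_shift_lower hK.1 hKlb)) (by positivity))
  have lower2 : ((1 / h ^ d) • (M ⊗ₖ K) - (a / 3 ^ d) • 1).PosSemidef := by
    have heq : (1 / h ^ d) • (M ⊗ₖ K) -
        (a / 3 ^ d) • (1 : Matrix (Fin p × Fin q) (Fin p × Fin q) ℝ) =
        (1 / h ^ d) • (M ⊗ₖ K - ((h / 3) ^ d * a) • 1) := by
      rw [smul_sub, smul_smul]
      congr 2
      rw [div_pow]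
      field_simp
    rw [heq]
    exact psd_smul' lower1 (by positivity)
  -- Assemble the blocks
  have hblock_ub : (b • 1 - Btil).PosSemidef := by
    rw [hBdef]
    have heq : b • (1 : Matrix ((Fin p × Fin q) ⊕ Fin q) ((Fin p × Fin q) ⊕ Fin q) ℝ) -
        Matrix.fromBlocks ((1 / h ^ d) • (M ⊗ₖ K)) 0 0 K =
        Matrix.fromBlocks (b • 1 - (1 / h ^ d) • (M ⊗ₖ K)) 0 0 (b • 1 - K) := by
      rw [← Matrix.fromBlocks_one, Matrix.fromBlocks_smul]
      ext (i | i) (j | j) <;> simp [Matrix.fromBlocks]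
    rw [heq]
    exact psd_fromBlocks upper2 hK_ub
  have hblock_lb : (Btil - (a / 3 ^ d) • 1).PosSemidef := by
    rw [hBdef]
    have heq : Matrix.fromBlocks ((1 / h ^ d) • (M ⊗ₖ K)) 0 0 K -
        (a / 3 ^ d) • (1 : Matrix ((Fin p × Fin q) ⊕ Fin q) ((Fin p × Fin q) ⊕ Fin q) ℝ) =
        Matrix.fromBlocks ((1 / h ^ d) • (M ⊗ₖ K) - (a / 3 ^ d) • 1) 0 0
          (K - (a / 3 ^ d) • 1) := by
      rw [← Matrix.fromBlocks_one, Matrix.fromBlocks_smul]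
      ext (i | i) (j | j) <;> simp [Matrix.fromBlocks]
    rw [heq]
    exact psd_fromBlocks lower2 hK_lb
  -- Eigenvalue bounds
  have hBub : ∀ i, hB.eigenvalues i ≤ b := eig_le_of_psd hB hblock_ub
  have hBlb : ∀ i, a / 3 ^ d ≤ hB.eigenvalues i := le_eig_of_psd hB hblock_lb
  have hsup : (⨆ i, hB.eigenvalues i) ≤ b := ciSup_le hBub
  have hinf : a / 3 ^ d ≤ ⨅ i, hB.eigenvalues i := le_ciInf hBlb
  have hinf_pos : 0 < ⨅ i, hB.eigenvalues i :=
    lt_of_lt_of_le (by positivity) hinf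
  refine ⟨hsup, hinf, ?_⟩
  calc (⨆ i, hB.eigenvalues i) / (⨅ i, hB.eigenvalues i)
      ≤ b / (a / 3 ^ d) := by
        exact div_le_div₀ hb_pos.le hsup (by positivity) hinf
    _ = 3 ^ d * (b / a) := by
        field_simp
end

section
/- Let à be the (n+1)×(n+1) block diagonal matrix with blocks B_k = (1/h^d)^{n-k} M^{⊗(n-k)} ⊗ K for k = 0,...,n (so B_n = K), where M is symmetric positive definite with λ_max(M) ≤ h^d, λ_min(M) ≥ (h/3)^d, and K is symmetric positive definite. Then κ(Ã) ≤ 3^{nd} κ(K). -/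
open Matrix Kronecker

section Aux

variable {ι : Type*} [Fintype ι] [DecidableEq ι]

lemma aux_conj_diag (A : Matrix ι ι ℝ) (hA : A.IsHermitian) (c : ℝ) :
    c • (1 : Matrix ι ι ℝ) =
      (hA.eigenvectorUnitary : Matrix ι ι ℝ) * diagonal (fun _ => c) *
        (star (hA.eigenvectorUnitary : Matrix ι ι ℝ)) := by
  have hU := (Matrix.mem_unitaryGroup_iff).mp (hA.eigenvectorUnitary).2
  rw [← smul_one_eq_diagonal, mul_smul_comm, mul_one, smul_mul_assoc, hU]

lemma aux_smul_one_sub_psd {A : Matrix ι ι ℝ} (hA : A.IsHermitian) (c : ℝ)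
    (hc : ∀ i, hA.eigenvalues i ≤ c) : (c • (1 : Matrix ι ι ℝ) - A).PosSemidef := by
  have h1 := aux_conj_diag A hA c
  have h2 : (hA.eigenvectorUnitary : Matrix ι ι ℝ) * diagonal (fun i => c - hA.eigenvalues i) *
        (star (hA.eigenvectorUnitary : Matrix ι ι ℝ)) = c • (1 : Matrix ι ι ℝ) - A := by
    have : (diagonal (fun i => c - hA.eigenvalues i) : Matrix ι ι ℝ)
        = diagonal (fun _ => c) - diagonal hA.eigenvalues := by
      rw [← diagonal_sub]
    rw [this, mul_sub, sub_mul, ← h1]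
    congr 1
    conv_rhs => rw [hA.spectral_theorem]
    rfl
  rw [← h2]
  exact (posSemidef_diagonal_iff.mpr (fun i => sub_nonneg.mpr (hc i))).mul_mul_conjTranspose_same _

lemma aux_sub_smul_one_psd {A : Matrix ι ι ℝ} (hA : A.IsHermitian) (c : ℝ)
    (hc : ∀ i, c ≤ hA.eigenvalues i) : (A - c • (1 : Matrix ι ι ℝ)).PosSemidef := by
  have h1 := aux_conj_diag A hA c
  have h2 : (hA.eigenvectorUnitary : Matrix ι ι ℝ) * diagonal (fun i => hA.eigenvalues i - c) *
        (star (hA.eigenvectorUnitary : Matrix ι ι ℝ)) = A - c • (1 : Matrix ι ι ℝ) := by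
    have : (diagonal (fun i => hA.eigenvalues i - c) : Matrix ι ι ℝ)
        = diagonal hA.eigenvalues - diagonal (fun _ => c) := by
      rw [← diagonal_sub]
    rw [this, mul_sub, sub_mul, ← h1]
    congr 1
    conv_rhs => rw [hA.spectral_theorem]
    rfl
  rw [← h2]
  exact (posSemidef_diagonal_iff.mpr (fun i => sub_nonneg.mpr (hc i))).mul_mul_conjTranspose_same _

lemma aux_eig_le_of_psd {A : Matrix ι ι ℝ} (hA : A.IsHermitian) (c : ℝ)
    (hpsd : (c • (1 : Matrix ι ι ℝ) - A).PosSemidef) (i : ι) : hA.eigenvalues i ≤ c := by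
  set v : ι → ℝ := ⇑(hA.eigenvectorBasis i) with hv
  have hvne : v ≠ 0 := by
    simpa [hv] using hA.eigenvectorBasis.orthonormal.ne_zero i
  have hpos : 0 < v ⬝ᵥ v := by
    rcases (Finset.sum_nonneg (fun j _ => mul_self_nonneg (v j))).lt_or_eq with h | h
    · exact h
    · exfalso; apply hvne
      have := (dotProduct_star_self_eq_zero (v := v)).mp (by simpa [dotProduct] using h.symm)
      simpa using this
  have h2 := hpsd.dotProduct_mulVec_nonneg v
  rw [sub_mulVec, dotProduct_sub, smul_mulVec, one_mulVec, dotProduct_smul,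
    hA.mulVec_eigenvectorBasis, dotProduct_smul] at h2
  simp only [star_trivial, smul_eq_mul] at h2
  nlinarith [h2, hpos]

lemma aux_le_eig_of_psd {A : Matrix ι ι ℝ} (hA : A.IsHermitian) (c : ℝ)
    (hpsd : (A - c • (1 : Matrix ι ι ℝ)).PosSemidef) (i : ι) : c ≤ hA.eigenvalues i := by
  set v : ι → ℝ := ⇑(hA.eigenvectorBasis i) with hv
  have hvne : v ≠ 0 := by
    simpa [hv] using hA.eigenvectorBasis.orthonormal.ne_zero i
  have hpos : 0 < v ⬝ᵥ v := by
    rcases (Finset.sum_nonneg (fun j _ => mul_self_nonneg (v j))).lt_or_eq with h | h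
    · exact h
    · exfalso; apply hvne
      have := (dotProduct_star_self_eq_zero (v := v)).mp (by simpa [dotProduct] using h.symm)
      simpa using this
  have h2 := hpsd.dotProduct_mulVec_nonneg v
  rw [sub_mulVec, dotProduct_sub, smul_mulVec, one_mulVec, dotProduct_smul,
    hA.mulVec_eigenvectorBasis, dotProduct_smul] at h2
  simp only [star_trivial, smul_eq_mul] at h2
  nlinarith [h2, hpos]

lemma aux_smul_one_psd (c : ℝ) (hc : 0 ≤ c) : ((c • (1 : Matrix ι ι ℝ))).PosSemidef := by
  rw [smul_one_eq_diagonal]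
  exact posSemidef_diagonal_iff.mpr (fun i => hc)

lemma aux_kron_psd {m' n' : Type*} [Fintype m'] [Fintype n'] {A : Matrix m' m' ℝ}
    {B : Matrix n' n' ℝ} (hA : A.PosSemidef) (hB : B.PosSemidef) : (A ⊗ₖ B).PosSemidef := by
  exact hA.kronecker hB

/-- The `m`-fold Kronecker power of `M` tensored with `K`, as an explicit matrix. -/
noncomputable def auxW {p q : ℕ} (M : Matrix (Fin p) (Fin p) ℝ) (K : Matrix (Fin q) (Fin q) ℝ)
    (m : ℕ) : Matrix ((Fin m → Fin p) × Fin q) ((Fin m → Fin p) × Fin q) ℝ :=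
  Matrix.of fun x y => (∏ l, M (x.1 l) (y.1 l)) * K x.2 y.2

lemma aux_W_bounds {p q : ℕ} (M : Matrix (Fin p) (Fin p) ℝ) (K : Matrix (Fin q) (Fin q) ℝ)
    (a b elo eup : ℝ) (ha : 0 ≤ a) (hb : 0 ≤ b) (helo : 0 ≤ elo) (heup : 0 ≤ eup)
    (hMub : (b • (1 : Matrix (Fin p) (Fin p) ℝ) - M).PosSemidef)
    (hMlb : (M - a • (1 : Matrix (Fin p) (Fin p) ℝ)).PosSemidef)
    (hKub : (eup • (1 : Matrix (Fin q) (Fin q) ℝ) - K).PosSemidef)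
    (hKlb : (K - elo • (1 : Matrix (Fin q) (Fin q) ℝ)).PosSemidef) :
    ∀ m : ℕ, ((b ^ m * eup) • 1 - auxW M K m).PosSemidef ∧
      (auxW M K m - (a ^ m * elo) • 1).PosSemidef := by
  have hM : M.PosSemidef := by
    have := hMlb.add (aux_smul_one_psd a ha)
    simpa using this
  intro m
  induction m with
  | zero =>
      constructor
      · have h1 : ((b ^ 0 * eup) • 1 - auxW M K 0) =
            (eup • (1 : Matrix (Fin q) (Fin q) ℝ) - K).submatrix Prod.snd Prod.snd := by
          ext ⟨α, i⟩ ⟨β, j⟩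
          have hab : α = β := Subsingleton.elim α β
          subst hab
          simp [auxW, one_apply, Prod.ext_iff]
        rw [h1]; exact hKub.submatrix _
      · have h1 : (auxW M K 0 - (a ^ 0 * elo) • 1) =
            (K - elo • (1 : Matrix (Fin q) (Fin q) ℝ)).submatrix Prod.snd Prod.snd := by
          ext ⟨α, i⟩ ⟨β, j⟩
          have hab : α = β := Subsingleton.elim α β
          subst hab
          simp [auxW, one_apply, Prod.ext_iff]
        rw [h1]; exact hKlb.submatrix _
  | succ m ih =>
      set g : ((Fin (m + 1) → Fin p) × Fin q) → (Fin p × ((Fin m → Fin p) × Fin q)) :=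
        fun x => (x.1 0, (fun l => x.1 l.succ, x.2)) with hg
      have hWpsd : (auxW M K m).PosSemidef := by
        have := ih.2.add (aux_smul_one_psd (a ^ m * elo) (by positivity))
        simpa using this
      constructor
      · have h1 : ((b ^ (m + 1) * eup) • 1 - auxW M K (m + 1)) =
            ((b • (1 : Matrix (Fin p) (Fin p) ℝ) - M) ⊗ₖ ((b ^ m * eup) • 1)
              + M ⊗ₖ ((b ^ m * eup) • 1 - auxW M K m)).submatrix g g := by
          ext ⟨γ, i⟩ ⟨δ, j⟩
          simp only [submatrix_apply, Matrix.add_apply, kroneckerMap_apply, Matrix.sub_apply, Matrix.smul_apply,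
            smul_eq_mul, of_apply, one_apply, auxW, hg, Fin.prod_univ_succ]
          by_cases h1 : γ 0 = δ 0 <;>
            by_cases h2 : ((fun l => γ l.succ, i) : (Fin m → Fin p) × Fin q) = (fun l => δ l.succ, j)
          · have hgd : γ = δ := by
              funext l
              refine Fin.cases h1 (fun l' => ?_) l
              exact congrFun (congrArg Prod.fst h2) l'
            have hij : i = j := congrArg Prod.snd h2
            subst hgd; subst hij
            simp only [if_pos rfl, Prod.mk.injEq, and_self, if_pos]
            ring
          · have hne : ¬((γ, i) : (Fin (m+1) → Fin p) × Fin q) = (δ, j) := by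
              intro hc
              exact h2 (by rw [Prod.mk.injEq] at hc; simp [hc.1, hc.2])
            simp only [if_pos h1, if_neg h2, if_neg hne]
            ring
          · have hne : ¬((γ, i) : (Fin (m+1) → Fin p) × Fin q) = (δ, j) := by
              intro hc
              exact h1 (by rw [Prod.mk.injEq] at hc; rw [hc.1])
            simp only [if_neg h1, if_pos h2, if_neg hne]
            ring
          · have hne : ¬((γ, i) : (Fin (m+1) → Fin p) × Fin q) = (δ, j) := by
              intro hc
              exact h1 (by rw [Prod.mk.injEq] at hc; rw [hc.1])
            simp only [if_neg h1, if_neg h2, if_neg hne]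
            ring
        rw [h1]
        exact ((aux_kron_psd hMub (aux_smul_one_psd _ (by positivity))).add
          (aux_kron_psd hM ih.1)).submatrix _
      · have h1 : (auxW M K (m + 1) - (a ^ (m + 1) * elo) • 1) =
            ((M - a • (1 : Matrix (Fin p) (Fin p) ℝ)) ⊗ₖ auxW M K m
              + (a • (1 : Matrix (Fin p) (Fin p) ℝ)) ⊗ₖ (auxW M K m - (a ^ m * elo) • 1)).submatrix g g := by
          ext ⟨γ, i⟩ ⟨δ, j⟩
          simp only [submatrix_apply, Matrix.add_apply, kroneckerMap_apply, Matrix.sub_apply, Matrix.smul_apply,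
            smul_eq_mul, of_apply, one_apply, auxW, hg, Fin.prod_univ_succ]
          by_cases h1 : γ 0 = δ 0 <;>
            by_cases h2 : ((fun l => γ l.succ, i) : (Fin m → Fin p) × Fin q) = (fun l => δ l.succ, j)
          · have hgd : γ = δ := by
              funext l
              refine Fin.cases h1 (fun l' => ?_) l
              exact congrFun (congrArg Prod.fst h2) l'
            have hij : i = j := congrArg Prod.snd h2
            subst hgd; subst hij
            simp only [if_pos rfl, Prod.mk.injEq, and_self, if_pos]
            ring
          · have hne : ¬((γ, i) : (Fin (m+1) → Fin p) × Fin q) = (δ, j) := by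
              intro hc
              exact h2 (by rw [Prod.mk.injEq] at hc; simp [hc.1, hc.2])
            simp only [if_pos h1, if_neg h2, if_neg hne]
            ring
          · have hne : ¬((γ, i) : (Fin (m+1) → Fin p) × Fin q) = (δ, j) := by
              intro hc
              exact h1 (by rw [Prod.mk.injEq] at hc; rw [hc.1])
            simp only [if_neg h1, if_pos h2, if_neg hne]
            ring
          · have hne : ¬((γ, i) : (Fin (m+1) → Fin p) × Fin q) = (δ, j) := by
              intro hc
              exact h1 (by rw [Prod.mk.injEq] at hc; rw [hc.1])
            simp only [if_neg h1, if_neg h2, if_neg hne]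
            ring
        rw [h1]
        exact ((aux_kron_psd hMlb hWpsd).add
          (aux_kron_psd (aux_smul_one_psd a ha) ih.2)).submatrix _

end Aux

theorem stmt13 {p q n d : ℕ} (hp : 0 < p) (hq : 0 < q) (hn : 1 ≤ n) (hd : 1 ≤ d)
    (h : ℝ) (hh : 0 < h)
    (M : Matrix (Fin p) (Fin p) ℝ) (K : Matrix (Fin q) (Fin q) ℝ)
    (hM : M.PosDef) (hK : K.PosDef)
    (hMmax : ∀ i, hM.1.eigenvalues i ≤ h ^ d)
    (hMmin : ∀ i, (h / 3) ^ d ≤ hM.1.eigenvalues i)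
    (Atil : Matrix (Σ k : Fin (n + 1), (Fin (n - (k : ℕ)) → Fin p) × Fin q)
                   (Σ k : Fin (n + 1), (Fin (n - (k : ℕ)) → Fin p) × Fin q) ℝ)
    (hAdef : Atil = Matrix.of fun a b =>
      if hk : a.1 = b.1 then
        ((1 / h ^ d) ^ (n - (a.1 : ℕ))) *
          (∏ l, M (a.2.1 l) (b.2.1 (Fin.cast (by rw [hk]) l))) * K a.2.2 b.2.2
      else 0)
    (hAt : Atil.IsHermitian) :
    (⨆ i, hAt.eigenvalues i) / (⨅ i, hAt.eigenvalues i) ≤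
      3 ^ (n * d) * ((⨆ i, hK.1.eigenvalues i) / (⨅ i, hK.1.eigenvalues i)) := by
  classical
  haveI : Nonempty (Fin q) := ⟨⟨0, hq⟩⟩
  haveI : Nonempty (Fin p) := ⟨⟨0, hp⟩⟩
  haveI hne : Nonempty (Σ k : Fin (n + 1), (Fin (n - (k : ℕ)) → Fin p) × Fin q) :=
    ⟨⟨0, (fun _ => ⟨0, hp⟩, ⟨0, hq⟩)⟩⟩
  set eup := ⨆ i, hK.1.eigenvalues i with heup
  set elo := ⨅ i, hK.1.eigenvalues i with helo
  have hbddA : BddAbove (Set.range hK.1.eigenvalues) := Set.Finite.bddAbove (Set.finite_range _)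
  have hbddB : BddBelow (Set.range hK.1.eigenvalues) := Set.Finite.bddBelow (Set.finite_range _)
  have hle : ∀ i, hK.1.eigenvalues i ≤ eup := fun i => le_ciSup hbddA i
  have hge : ∀ i, elo ≤ hK.1.eigenvalues i := fun i => ciInf_le hbddB i
  have helo_pos : 0 < elo := by
    obtain ⟨i0, hi0⟩ := Finite.exists_min hK.1.eigenvalues
    have h0 : elo = hK.1.eigenvalues i0 := le_antisymm (ciInf_le hbddB i0) (le_ciInf hi0)
    rw [h0]; exact hK.eigenvalues_pos i0
  have heup_pos : 0 < eup :=
    lt_of_lt_of_le (hK.eigenvalues_pos (Classical.arbitrary _)) (hle _)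
  have hbne : (h : ℝ) ^ d ≠ 0 := pow_ne_zero d hh.ne'
  have hW := aux_W_bounds M K ((h / 3) ^ d) (h ^ d) elo eup (by positivity) (by positivity)
    helo_pos.le heup_pos.le
    (aux_smul_one_sub_psd hM.1 (h ^ d) hMmax)
    (aux_sub_smul_one_psd hM.1 ((h / 3) ^ d) hMmin)
    (aux_smul_one_sub_psd hK.1 eup hle)
    (aux_sub_smul_one_psd hK.1 elo hge)
  -- quadratic-form decompositions
  have Qsplit : ∀ x : (Σ k : Fin (n + 1), (Fin (n - (k : ℕ)) → Fin p) × Fin q) → ℝ,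
      x ⬝ᵥ (Atil *ᵥ x) = ∑ k : Fin (n + 1), (1 / h ^ d) ^ (n - (k : ℕ)) *
        ((fun z => x ⟨k, z⟩) ⬝ᵥ (auxW M K (n - (k : ℕ)) *ᵥ (fun z => x ⟨k, z⟩))) := by
    intro x
    simp only [dotProduct, mulVec, dotProduct]
    rw [← Finset.univ_sigma_univ, Finset.sum_sigma]
    refine Finset.sum_congr rfl fun k _ => ?_
    rw [Finset.mul_sum]
    refine Finset.sum_congr rfl fun z _ => ?_
    have key : (∑ b ∈ Finset.univ.sigma (fun _ => Finset.univ), Atil ⟨k, z⟩ b * x b)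
        = (1 / h ^ d) ^ (n - (k : ℕ)) * ∑ w, auxW M K (n - (k : ℕ)) z w * x ⟨k, w⟩ := by
      rw [Finset.sum_sigma]
      have step : ∀ k' : Fin (n + 1),
          (∑ w : (Fin (n - (k' : ℕ)) → Fin p) × Fin q, Atil ⟨k, z⟩ ⟨k', w⟩ * x ⟨k', w⟩)
          = if _ : (k : Fin (n+1)) = k' then
              (1 / h ^ d) ^ (n - (k : ℕ)) * ∑ w, auxW M K (n - (k : ℕ)) z w * x ⟨k, w⟩ else 0 := by
        intro k'
        by_cases hkk : (k : Fin (n+1)) = k'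
        · subst hkk
          rw [dif_pos rfl, Finset.mul_sum]
          refine Finset.sum_congr rfl fun w _ => ?_
          rw [hAdef]
          simp only [Matrix.of_apply]
          rw [dif_pos trivial]
          show ((1 / h ^ d) ^ (n - (k : ℕ)) * ∏ l, M (z.1 l) (w.1 l)) * K z.2 w.2 * x ⟨k, w⟩
            = (1 / h ^ d) ^ (n - (k : ℕ)) * (auxW M K (n - (k : ℕ)) z w * x ⟨k, w⟩)
          show _ = (1 / h ^ d) ^ (n - (k : ℕ)) * ((∏ l, M (z.1 l) (w.1 l)) * K z.2 w.2 * x ⟨k, w⟩)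
          ring
        · rw [dif_neg hkk]
          refine Finset.sum_eq_zero fun w _ => ?_
          rw [hAdef]
          simp only [Matrix.of_apply, dif_neg hkk, zero_mul]
      calc (∑ k' : Fin (n+1), ∑ w : (Fin (n - (k' : ℕ)) → Fin p) × Fin q,
              Atil ⟨k, z⟩ ⟨k', w⟩ * x ⟨k', w⟩)
          = ∑ k' : Fin (n+1), if _ : (k : Fin (n+1)) = k' then
              (1 / h ^ d) ^ (n - (k : ℕ)) * ∑ w, auxW M K (n - (k : ℕ)) z w * x ⟨k, w⟩ else 0 :=
            Finset.sum_congr rfl fun k' _ => step k'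
        _ = _ := by rw [Fintype.sum_dite_eq]
    rw [key]
    ring
  have Xsplit : ∀ x : (Σ k : Fin (n + 1), (Fin (n - (k : ℕ)) → Fin p) × Fin q) → ℝ,
      x ⬝ᵥ x = ∑ k : Fin (n + 1),
        ((fun z => x ⟨k, z⟩) ⬝ᵥ (fun z => x ⟨k, z⟩)) := by
    intro x
    simp only [dotProduct]
    rw [← Finset.univ_sigma_univ, Finset.sum_sigma]
  -- upper bound psd
  have hup : (eup • (1 : Matrix _ _ ℝ) - Atil).PosSemidef := by
    refine .of_dotProduct_mulVec_nonneg (((aux_smul_one_psd eup heup_pos.le).1).sub hAt) fun x => ?_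
    rw [star_trivial, sub_mulVec, dotProduct_sub, smul_mulVec, one_mulVec,
      dotProduct_smul, smul_eq_mul, Qsplit x, Xsplit x, Finset.mul_sum,
      ← Finset.sum_sub_distrib]
    refine Finset.sum_nonneg fun k _ => ?_
    have h1 := (hW (n - (k : ℕ))).1.dotProduct_mulVec_nonneg (fun z => x ⟨k, z⟩)
    rw [star_trivial, sub_mulVec, dotProduct_sub, smul_mulVec, one_mulVec,
      dotProduct_smul, smul_eq_mul] at h1
    set S := (fun z => x ⟨k, z⟩) ⬝ᵥ (fun z => x ⟨k, z⟩) with hS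
    set Q := (fun z => x ⟨k, z⟩) ⬝ᵥ (auxW M K (n - (k : ℕ)) *ᵥ (fun z => x ⟨k, z⟩)) with hQ
    have hck : (1 / h ^ d) ^ (n - (k : ℕ)) * (h ^ d) ^ (n - (k : ℕ)) = 1 := by
      rw [← mul_pow, one_div_mul_cancel hbne, one_pow]
    have h2 : 0 ≤ (1 / h ^ d) ^ (n - (k : ℕ)) * ((h ^ d) ^ (n - (k : ℕ)) * eup * S - Q) :=
      mul_nonneg (by positivity) h1
    have h3 : (1 / h ^ d) ^ (n - (k : ℕ)) * ((h ^ d) ^ (n - (k : ℕ)) * eup * S - Q)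
        = eup * S - (1 / h ^ d) ^ (n - (k : ℕ)) * Q := by
      rw [mul_sub, ← mul_assoc, ← mul_assoc, hck, one_mul]
    linarith [h2, h3.symm.le]
  -- lower bound psd
  have hlo : (Atil - (elo / 3 ^ (n * d)) • (1 : Matrix _ _ ℝ)).PosSemidef := by
    have hclo_pos : 0 < elo / 3 ^ (n * d) := by positivity
    refine .of_dotProduct_mulVec_nonneg (hAt.sub ((aux_smul_one_psd _ hclo_pos.le).1)) fun x => ?_
    rw [star_trivial, sub_mulVec, dotProduct_sub, smul_mulVec, one_mulVec,
      dotProduct_smul, smul_eq_mul, Qsplit x, Xsplit x, Finset.mul_sum,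
      ← Finset.sum_sub_distrib]
    refine Finset.sum_nonneg fun k _ => ?_
    have h1 := (hW (n - (k : ℕ))).2.dotProduct_mulVec_nonneg (fun z => x ⟨k, z⟩)
    rw [star_trivial, sub_mulVec, dotProduct_sub, smul_mulVec, one_mulVec,
      dotProduct_smul, smul_eq_mul] at h1
    set S := (fun z => x ⟨k, z⟩) ⬝ᵥ (fun z => x ⟨k, z⟩) with hS
    set Q := (fun z => x ⟨k, z⟩) ⬝ᵥ (auxW M K (n - (k : ℕ)) *ᵥ (fun z => x ⟨k, z⟩)) with hQ
    have hSnn : 0 ≤ S := Finset.sum_nonneg (fun j _ => mul_self_nonneg _)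
    have hck : (1 / h ^ d) ^ (n - (k : ℕ)) * ((h / 3) ^ d) ^ (n - (k : ℕ))
        = 1 / 3 ^ (d * (n - (k : ℕ))) := by
      have h0 : (1 / h ^ d) * ((h / 3) ^ d) = 1 / 3 ^ d := by
        rw [div_pow]
        field_simp
      rw [← mul_pow, h0, div_pow, one_pow, ← pow_mul]
    have h2 : 0 ≤ (1 / h ^ d) ^ (n - (k : ℕ)) * (Q - ((h / 3) ^ d) ^ (n - (k : ℕ)) * elo * S) :=
      mul_nonneg (by positivity) h1
    have h3 : (1 / h ^ d) ^ (n - (k : ℕ)) * (Q - ((h / 3) ^ d) ^ (n - (k : ℕ)) * elo * S)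
        = (1 / h ^ d) ^ (n - (k : ℕ)) * Q - (1 / 3 ^ (d * (n - (k : ℕ)))) * elo * S := by
      rw [mul_sub, ← mul_assoc, ← mul_assoc, hck]
    have hpow : (3 : ℝ) ^ (d * (n - (k : ℕ))) ≤ 3 ^ (n * d) := by
      apply pow_le_pow_right₀ (by norm_num)
      calc d * (n - (k : ℕ)) ≤ d * n := Nat.mul_le_mul_left d (Nat.sub_le n _)
        _ = n * d := Nat.mul_comm d n
    have hmono : elo / 3 ^ (n * d) ≤ (1 / 3 ^ (d * (n - (k : ℕ)))) * elo := by
      rw [one_div, inv_mul_eq_div]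
      exact div_le_div_of_nonneg_left helo_pos.le (by positivity) hpow
    have h4 : (elo / 3 ^ (n * d)) * S ≤ ((1 / 3 ^ (d * (n - (k : ℕ)))) * elo) * S :=
      mul_le_mul_of_nonneg_right hmono hSnn
    rw [h3] at h2
    nlinarith [h2, h4]
  -- eigenvalue bounds and conclusion
  have hub : ∀ i, hAt.eigenvalues i ≤ eup := aux_eig_le_of_psd hAt eup hup
  have hlb : ∀ i, elo / 3 ^ (n * d) ≤ hAt.eigenvalues i := aux_le_eig_of_psd hAt _ hlo
  have hclo_pos : 0 < elo / 3 ^ (n * d) := by positivity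
  have hsupA : (⨆ i, hAt.eigenvalues i) ≤ eup := ciSup_le hub
  have hinfA : elo / 3 ^ (n * d) ≤ ⨅ i, hAt.eigenvalues i := le_ciInf hlb
  have hstep : (⨆ i, hAt.eigenvalues i) / (⨅ i, hAt.eigenvalues i)
      ≤ eup / (elo / 3 ^ (n * d)) :=
    div_le_div₀ heup_pos.le hsupA hclo_pos hinfA
  refine hstep.trans (le_of_eq ?_)
  rw [div_div_eq_mul_div, mul_comm eup _, mul_div_assoc]
end
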